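/- Let B, R > 0 and ℓ > 2R, and set x* = (0, −i·√(ℓ²/4 − R²)). Then the second-order complex partial derivatives of s₀ at x* satisfy: ∂₁∂₂ s₀(x*) = 0, ∂₁² s₀(x*) = (Bℓ/(2R²))·(ℓ − √(ℓ² − 4R²)), and ∂₂² s₀(x*) = (B/(2R²))·√(ℓ² − 4R²)·(ℓ − √(ℓ² − 4R²)); in particular all entries of the Hessian of s₀ at x* are real. -/

import Mathlib

set_option maxHeartbeats 1000000
open Complex


/-- The phase function `s₀` of the paper, with parameters `B`, `R`, `ℓ`,
using the principal branch `Complex.log` of the complex logarithm. -/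
noncomputable def s0 (B R ℓ : ℝ) (x₁ x₂ : ℂ) : ℂ :=
  ((B : ℂ) / 4) * (x₁ + (ℓ : ℂ) / 2) ^ 2 + ((B : ℂ) / 4) * (x₁ - (ℓ : ℂ) / 2) ^ 2
    + ((B : ℂ) / 2) * x₂ ^ 2 - (B : ℂ) * (R : ℂ) ^ 2 / 2
    + Complex.I * ((B : ℂ) * (ℓ : ℂ) / 2) * x₂
    - ((B : ℂ) * (R : ℂ) ^ 2 / 2) * Complex.log (((ℓ : ℂ) / 2 + x₁ + Complex.I * x₂) / (R : ℂ))
    - ((B : ℂ) * (R : ℂ) ^ 2 / 2) * Complex.log (((ℓ : ℂ) / 2 - x₁ + Complex.I * x₂) / (R : ℂ))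

lemma slit_aux {u : ℂ} {R : ℝ} (hR : 0 < R) (h : 0 < u.re) :
    u / (R : ℂ) ∈ Complex.slitPlane := by
  rw [Complex.mem_slitPlane_iff]
  left
  rw [Complex.div_ofReal_re]
  exact div_pos h hR

lemma ne_zero_of_re_pos' {u : ℂ} (h : 0 < u.re) : u ≠ 0 := by
  intro h0; rw [h0] at h; simp at h

lemma s0_hasDerivAt_z (B R ℓ : ℝ) (hR : 0 < R) (w z : ℂ)
    (h1 : 0 < ((ℓ : ℂ) / 2 + z + Complex.I * w).re)
    (h2 : 0 < ((ℓ : ℂ) / 2 - z + Complex.I * w).re) :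
    HasDerivAt (fun z : ℂ => s0 B R ℓ z w)
      ((B : ℂ) * z - (B : ℂ) * (R : ℂ) ^ 2 / 2 / ((ℓ : ℂ) / 2 + z + Complex.I * w)
        + (B : ℂ) * (R : ℂ) ^ 2 / 2 / ((ℓ : ℂ) / 2 - z + Complex.I * w)) z := by
  have hRne : (R : ℂ) ≠ 0 := by exact_mod_cast hR.ne'
  have hu1 : HasDerivAt (fun z : ℂ => (ℓ : ℂ) / 2 + z + Complex.I * w) 1 z := by
    simpa using ((hasDerivAt_id z).const_add ((ℓ : ℂ) / 2)).add_const (Complex.I * w)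
  have hu2 : HasDerivAt (fun z : ℂ => (ℓ : ℂ) / 2 - z + Complex.I * w) (-1) z := by
    simpa [sub_eq_add_neg] using
      (((hasDerivAt_id z).neg.const_add ((ℓ : ℂ) / 2)).add_const (Complex.I * w))
  have hlog1 : HasDerivAt (fun z : ℂ => Complex.log (((ℓ : ℂ) / 2 + z + Complex.I * w) / R))
      ((((ℓ : ℂ) / 2 + z + Complex.I * w) / R)⁻¹ * (1 / R)) z :=
    by have := (Complex.hasDerivAt_log (slit_aux hR h1)).comp z (hu1.div_const R); exact this
  have hlog2 : HasDerivAt (fun z : ℂ => Complex.log (((ℓ : ℂ) / 2 - z + Complex.I * w) / R))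
      ((((ℓ : ℂ) / 2 - z + Complex.I * w) / R)⁻¹ * (-1 / R)) z :=
    by have := (Complex.hasDerivAt_log (slit_aux hR h2)).comp z (hu2.div_const R); exact this
  have hp1 : HasDerivAt (fun z : ℂ => (B : ℂ) / 4 * (z + (ℓ : ℂ) / 2) ^ 2)
      ((B : ℂ) / 4 * ((2 : ℕ) * (z + (ℓ : ℂ) / 2) ^ 1 * 1)) z :=
    (((hasDerivAt_id z).add_const ((ℓ : ℂ) / 2)).pow 2).const_mul ((B : ℂ) / 4)
  have hp2 : HasDerivAt (fun z : ℂ => (B : ℂ) / 4 * (z - (ℓ : ℂ) / 2) ^ 2)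
      ((B : ℂ) / 4 * ((2 : ℕ) * (z - (ℓ : ℂ) / 2) ^ 1 * 1)) z := by
    have := (((hasDerivAt_id z).add_const (-((ℓ : ℂ) / 2))).pow 2).const_mul ((B : ℂ) / 4)
    simpa [sub_eq_add_neg] using this
  have h := (((((hp1.add hp2).add
      (hasDerivAt_const z ((B : ℂ) / 2 * w ^ 2))).sub_const ((B : ℂ) * (R : ℂ) ^ 2 / 2)).add
      (hasDerivAt_const z (Complex.I * ((B : ℂ) * (ℓ : ℂ) / 2) * w))).sub
      (hlog1.const_mul ((B : ℂ) * (R : ℂ) ^ 2 / 2))).sub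
      (hlog2.const_mul ((B : ℂ) * (R : ℂ) ^ 2 / 2))
  have hne1 := ne_zero_of_re_pos' h1
  have hne2 := ne_zero_of_re_pos' h2
  have key2 : ∀ u v : ℂ, u ≠ 0 → (u / (R : ℂ))⁻¹ * (v / R) = v / u := by
    intro u v hu
    rw [inv_div, div_mul_div_comm, mul_comm u (R : ℂ), mul_div_mul_left _ _ hRne]
  refine h.congr_deriv ?_
  rw [key2 _ _ hne1, key2 _ _ hne2]
  ring

lemma s0_hasDerivAt_w (B R ℓ : ℝ) (hR : 0 < R) (z w : ℂ)
    (h1 : 0 < ((ℓ : ℂ) / 2 + z + Complex.I * w).re)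
    (h2 : 0 < ((ℓ : ℂ) / 2 - z + Complex.I * w).re) :
    HasDerivAt (fun w : ℂ => s0 B R ℓ z w)
      ((B : ℂ) * w + Complex.I * ((B : ℂ) * (ℓ : ℂ) / 2)
        - (B : ℂ) * (R : ℂ) ^ 2 / 2 * Complex.I / ((ℓ : ℂ) / 2 + z + Complex.I * w)
        - (B : ℂ) * (R : ℂ) ^ 2 / 2 * Complex.I / ((ℓ : ℂ) / 2 - z + Complex.I * w)) w := by
  have hRne : (R : ℂ) ≠ 0 := by exact_mod_cast hR.ne'
  have hu1 : HasDerivAt (fun w : ℂ => (ℓ : ℂ) / 2 + z + Complex.I * w) Complex.I w := by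
    simpa using ((hasDerivAt_id w).const_mul Complex.I).const_add ((ℓ : ℂ) / 2 + z)
  have hu2 : HasDerivAt (fun w : ℂ => (ℓ : ℂ) / 2 - z + Complex.I * w) Complex.I w := by
    simpa using ((hasDerivAt_id w).const_mul Complex.I).const_add ((ℓ : ℂ) / 2 - z)
  have hlog1 : HasDerivAt (fun w : ℂ => Complex.log (((ℓ : ℂ) / 2 + z + Complex.I * w) / R))
      ((((ℓ : ℂ) / 2 + z + Complex.I * w) / R)⁻¹ * (Complex.I / R)) w :=
    by have := (Complex.hasDerivAt_log (slit_aux hR h1)).comp w (hu1.div_const R); exact this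
  have hlog2 : HasDerivAt (fun w : ℂ => Complex.log (((ℓ : ℂ) / 2 - z + Complex.I * w) / R))
      ((((ℓ : ℂ) / 2 - z + Complex.I * w) / R)⁻¹ * (Complex.I / R)) w :=
    by have := (Complex.hasDerivAt_log (slit_aux hR h2)).comp w (hu2.div_const R); exact this
  have hp3 : HasDerivAt (fun w : ℂ => (B : ℂ) / 2 * w ^ 2)
      ((B : ℂ) / 2 * ((2 : ℕ) * w ^ 1 * 1)) w :=
    ((hasDerivAt_id w).pow 2).const_mul ((B : ℂ) / 2)
  have hp5 : HasDerivAt (fun w : ℂ => Complex.I * ((B : ℂ) * (ℓ : ℂ) / 2) * w)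
      (Complex.I * ((B : ℂ) * (ℓ : ℂ) / 2)) w := by
    simpa using (hasDerivAt_id w).const_mul (Complex.I * ((B : ℂ) * (ℓ : ℂ) / 2))
  have h := ((((((hasDerivAt_const w ((B : ℂ) / 4 * (z + (ℓ : ℂ) / 2) ^ 2)).add
      (hasDerivAt_const w ((B : ℂ) / 4 * (z - (ℓ : ℂ) / 2) ^ 2))).add hp3).sub_const
      ((B : ℂ) * (R : ℂ) ^ 2 / 2)).add hp5).sub
      (hlog1.const_mul ((B : ℂ) * (R : ℂ) ^ 2 / 2))).sub
      (hlog2.const_mul ((B : ℂ) * (R : ℂ) ^ 2 / 2))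
  have hne1 := ne_zero_of_re_pos' h1
  have hne2 := ne_zero_of_re_pos' h2
  have key2 : ∀ u v : ℂ, u ≠ 0 → (u / (R : ℂ))⁻¹ * (v / R) = v / u := by
    intro u v hu
    rw [inv_div, div_mul_div_comm, mul_comm u (R : ℂ), mul_div_mul_left _ _ hRne]
  refine h.congr_deriv ?_
  rw [key2 _ _ hne1, key2 _ _ hne2]
  ring


/-- the second-order complex partial derivatives of `s₀` at
`x* = (0, −i√(ℓ²/4 − R²))` satisfy `∂₁∂₂ s₀(x*) = 0`,
`∂₁² s₀(x*) = (Bℓ/(2R²))(ℓ − √(ℓ² − 4R²))` and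
`∂₂² s₀(x*) = (B/(2R²))√(ℓ² − 4R²)(ℓ − √(ℓ² − 4R²))`; in particular all entries of
the Hessian are real (the right-hand sides are real numbers coerced into `ℂ`). -/
theorem s0_hessian (B R ℓ : ℝ) (hB : 0 < B) (hR : 0 < R) (hℓ : 2 * R < ℓ) :
    deriv (fun w : ℂ => deriv (fun z : ℂ => s0 B R ℓ z w) 0)
        (-(Complex.I * (Real.sqrt (ℓ ^ 2 / 4 - R ^ 2) : ℂ))) = 0 ∧
    deriv (deriv (fun z : ℂ => s0 B R ℓ z (-(Complex.I * (Real.sqrt (ℓ ^ 2 / 4 - R ^ 2) : ℂ))))) 0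
      = ((B * ℓ / (2 * R ^ 2) * (ℓ - Real.sqrt (ℓ ^ 2 - 4 * R ^ 2)) : ℝ) : ℂ) ∧
    deriv (deriv (fun w : ℂ => s0 B R ℓ 0 w))
        (-(Complex.I * (Real.sqrt (ℓ ^ 2 / 4 - R ^ 2) : ℂ)))
      = ((B / (2 * R ^ 2) * Real.sqrt (ℓ ^ 2 - 4 * R ^ 2)
          * (ℓ - Real.sqrt (ℓ ^ 2 - 4 * R ^ 2)) : ℝ) : ℂ) := by
  set a : ℝ := Real.sqrt (ℓ ^ 2 / 4 - R ^ 2) with ha_def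
  have hRℓ : 0 ≤ ℓ ^ 2 / 4 - R ^ 2 := by nlinarith
  have ha2 : a ^ 2 = ℓ ^ 2 / 4 - R ^ 2 := Real.sq_sqrt hRℓ
  have ha0 : 0 ≤ a := Real.sqrt_nonneg _
  have haℓ : a < ℓ / 2 := by nlinarith
  have hsq : Real.sqrt (ℓ ^ 2 - 4 * R ^ 2) = 2 * a := by
    rw [show ℓ ^ 2 - 4 * R ^ 2 = (2 * a) ^ 2 by nlinarith]
    exact Real.sqrt_sq (by linarith)
  set wst : ℂ := -(Complex.I * (a : ℂ)) with hw_def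
  have hIw : Complex.I * wst = (a : ℂ) := by
    rw [hw_def, mul_neg, ← mul_assoc, Complex.I_mul_I]; ring
  have hre0 : (0 : ℝ) < ℓ / 2 + a := by linarith [hR, haℓ]; 
  refine ⟨?_, ?_, ?_⟩
  · -- mixed derivative is 0
    have hev : (fun w : ℂ => deriv (fun z : ℂ => s0 B R ℓ z w) 0) =ᶠ[nhds wst]
        (fun _ : ℂ => (0 : ℂ)) := by
      have hopen : IsOpen {w : ℂ | 0 < ((ℓ : ℂ) / 2 + 0 + Complex.I * w).re ∧
          0 < ((ℓ : ℂ) / 2 - 0 + Complex.I * w).re} := by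
        apply IsOpen.inter
        · exact isOpen_lt continuous_const
            (Complex.continuous_re.comp (by continuity))
        · exact isOpen_lt continuous_const
            (Complex.continuous_re.comp (by continuity))
      have hmem : wst ∈ {w : ℂ | 0 < ((ℓ : ℂ) / 2 + 0 + Complex.I * w).re ∧
          0 < ((ℓ : ℂ) / 2 - 0 + Complex.I * w).re} := by
        constructor <;> · simp only [hIw]; push_cast; simp; linarith
      filter_upwards [hopen.mem_nhds hmem] with w hw
      have hd := s0_hasDerivAt_z B R ℓ hR w 0 hw.1 hw.2
      rw [hd.deriv]
      ring
    rw [hev.deriv_eq, deriv_const]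
  · -- d11
    have hev : deriv (fun z : ℂ => s0 B R ℓ z wst) =ᶠ[nhds 0]
        (fun z : ℂ => (B : ℂ) * z
          - (B : ℂ) * (R : ℂ) ^ 2 / 2 / ((ℓ : ℂ) / 2 + z + Complex.I * wst)
          + (B : ℂ) * (R : ℂ) ^ 2 / 2 / ((ℓ : ℂ) / 2 - z + Complex.I * wst)) := by
      have hopen : IsOpen {z : ℂ | 0 < ((ℓ : ℂ) / 2 + z + Complex.I * wst).re ∧
          0 < ((ℓ : ℂ) / 2 - z + Complex.I * wst).re} := by
        apply IsOpen.inter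
        · exact isOpen_lt continuous_const (Complex.continuous_re.comp (by continuity))
        · exact isOpen_lt continuous_const (Complex.continuous_re.comp (by continuity))
      have hmem : (0 : ℂ) ∈ {z : ℂ | 0 < ((ℓ : ℂ) / 2 + z + Complex.I * wst).re ∧
          0 < ((ℓ : ℂ) / 2 - z + Complex.I * wst).re} := by
        constructor <;> · simp only [hIw]; push_cast; simp; linarith
      filter_upwards [hopen.mem_nhds hmem] with z hz
      exact (s0_hasDerivAt_z B R ℓ hR wst z hz.1 hz.2).deriv
    rw [hev.deriv_eq]
    have h1 : 0 < ((ℓ : ℂ) / 2 + 0 + Complex.I * wst).re := by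
      simp only [hIw]; push_cast; simp; linarith
    have h2 : 0 < ((ℓ : ℂ) / 2 - 0 + Complex.I * wst).re := by
      simp only [hIw]; push_cast; simp; linarith
    have hne1 := ne_zero_of_re_pos' h1
    have hne2 := ne_zero_of_re_pos' h2
    have hu1 : HasDerivAt (fun z : ℂ => (ℓ : ℂ) / 2 + z + Complex.I * wst) 1 0 := by
      simpa using ((hasDerivAt_id (0 : ℂ)).const_add ((ℓ : ℂ) / 2)).add_const (Complex.I * wst)
    have hu2 : HasDerivAt (fun z : ℂ => (ℓ : ℂ) / 2 - z + Complex.I * wst) (-1) 0 := by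
      simpa [sub_eq_add_neg] using
        (((hasDerivAt_id (0 : ℂ)).neg.const_add ((ℓ : ℂ) / 2)).add_const (Complex.I * wst))
    have hg : HasDerivAt (fun z : ℂ => (B : ℂ) * z
          - (B : ℂ) * (R : ℂ) ^ 2 / 2 / ((ℓ : ℂ) / 2 + z + Complex.I * wst)
          + (B : ℂ) * (R : ℂ) ^ 2 / 2 / ((ℓ : ℂ) / 2 - z + Complex.I * wst))
        ((B : ℂ)
          - (0 * ((ℓ : ℂ) / 2 + 0 + Complex.I * wst) - (B : ℂ) * (R : ℂ) ^ 2 / 2 * 1) /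
              ((ℓ : ℂ) / 2 + 0 + Complex.I * wst) ^ 2
          + (0 * ((ℓ : ℂ) / 2 - 0 + Complex.I * wst) - (B : ℂ) * (R : ℂ) ^ 2 / 2 * (-1)) /
              ((ℓ : ℂ) / 2 - 0 + Complex.I * wst) ^ 2) 0 := by
      have hb : HasDerivAt (fun z : ℂ => (B : ℂ) * z) (B : ℂ) 0 := by
        simpa using (hasDerivAt_id (0 : ℂ)).const_mul (B : ℂ)
      exact (hb.sub (((hasDerivAt_const (0:ℂ) ((B : ℂ) * (R : ℂ) ^ 2 / 2)).div hu1 hne1))).add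
        ((hasDerivAt_const (0:ℂ) ((B : ℂ) * (R : ℂ) ^ 2 / 2)).div hu2 hne2)
    rw [hg.deriv]
    have hIw' : ((ℓ : ℂ) / 2 + 0 + Complex.I * wst) = ((ℓ / 2 + a : ℝ) : ℂ) := by
      rw [hIw]; push_cast; ring
    have hIw'' : ((ℓ : ℂ) / 2 - 0 + Complex.I * wst) = ((ℓ / 2 + a : ℝ) : ℂ) := by
      rw [hIw]; push_cast; ring
    rw [hIw', hIw'', hsq]
    have hreal : B - (0 * (ℓ / 2 + a) - B * R ^ 2 / 2 * 1) / (ℓ / 2 + a) ^ 2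
        + (0 * (ℓ / 2 + a) - B * R ^ 2 / 2 * (-1)) / (ℓ / 2 + a) ^ 2
        = B * ℓ / (2 * R ^ 2) * (ℓ - 2 * a) := by
      have hR2 : R ^ 2 = (ℓ / 2 + a) * (ℓ / 2 - a) := by nlinarith
      have hqpos : (0:ℝ) < ℓ / 2 - a := by nlinarith
      obtain ⟨p, q, hpd, hqd⟩ : ∃ p q : ℝ, p = ℓ / 2 + a ∧ q = ℓ / 2 - a := ⟨_, _, rfl, rfl⟩
      have hp0 : p ≠ 0 := by rw [hpd]; exact hre0.ne'
      have hq0 : q ≠ 0 := by rw [hqd]; exact hqpos.ne'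
      have hR2' : R ^ 2 = p * q := by rw [hpd, hqd]; exact hR2
      have hsum : ℓ = p + q := by rw [hpd, hqd]; ring
      have haq : a = (p - q) / 2 := by rw [hpd, hqd]; ring
      rw [← hpd, hR2', hsum, haq]
      field_simp
      ring
    exact_mod_cast congrArg (fun x : ℝ => (x : ℂ)) hreal
  · -- d22
    have hev : deriv (fun w : ℂ => s0 B R ℓ 0 w) =ᶠ[nhds wst]
        (fun w : ℂ => (B : ℂ) * w + Complex.I * ((B : ℂ) * (ℓ : ℂ) / 2)
          - (B : ℂ) * (R : ℂ) ^ 2 / 2 * Complex.I / ((ℓ : ℂ) / 2 + 0 + Complex.I * w)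
          - (B : ℂ) * (R : ℂ) ^ 2 / 2 * Complex.I / ((ℓ : ℂ) / 2 - 0 + Complex.I * w)) := by
      have hopen : IsOpen {w : ℂ | 0 < ((ℓ : ℂ) / 2 + 0 + Complex.I * w).re ∧
          0 < ((ℓ : ℂ) / 2 - 0 + Complex.I * w).re} := by
        apply IsOpen.inter
        · exact isOpen_lt continuous_const (Complex.continuous_re.comp (by continuity))
        · exact isOpen_lt continuous_const (Complex.continuous_re.comp (by continuity))
      have hmem : wst ∈ {w : ℂ | 0 < ((ℓ : ℂ) / 2 + 0 + Complex.I * w).re ∧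
          0 < ((ℓ : ℂ) / 2 - 0 + Complex.I * w).re} := by
        constructor <;> · simp only [hIw]; push_cast; simp; linarith
      filter_upwards [hopen.mem_nhds hmem] with w hw
      exact (s0_hasDerivAt_w B R ℓ hR 0 w hw.1 hw.2).deriv
    rw [hev.deriv_eq]
    have h1 : 0 < ((ℓ : ℂ) / 2 + 0 + Complex.I * wst).re := by
      simp only [hIw]; push_cast; simp; linarith
    have h2 : 0 < ((ℓ : ℂ) / 2 - 0 + Complex.I * wst).re := by
      simp only [hIw]; push_cast; simp; linarith
    have hne1 := ne_zero_of_re_pos' h1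
    have hne2 := ne_zero_of_re_pos' h2
    have hu1 : HasDerivAt (fun w : ℂ => (ℓ : ℂ) / 2 + 0 + Complex.I * w) Complex.I wst := by
      simpa using ((hasDerivAt_id wst).const_mul Complex.I).const_add ((ℓ : ℂ) / 2 + 0)
    have hu2 : HasDerivAt (fun w : ℂ => (ℓ : ℂ) / 2 - 0 + Complex.I * w) Complex.I wst := by
      simpa using ((hasDerivAt_id wst).const_mul Complex.I).const_add ((ℓ : ℂ) / 2 - 0)
    have hg : HasDerivAt (fun w : ℂ => (B : ℂ) * w + Complex.I * ((B : ℂ) * (ℓ : ℂ) / 2)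
          - (B : ℂ) * (R : ℂ) ^ 2 / 2 * Complex.I / ((ℓ : ℂ) / 2 + 0 + Complex.I * w)
          - (B : ℂ) * (R : ℂ) ^ 2 / 2 * Complex.I / ((ℓ : ℂ) / 2 - 0 + Complex.I * w))
        ((B : ℂ)
          - (0 * ((ℓ : ℂ) / 2 + 0 + Complex.I * wst)
              - (B : ℂ) * (R : ℂ) ^ 2 / 2 * Complex.I * Complex.I) /
              ((ℓ : ℂ) / 2 + 0 + Complex.I * wst) ^ 2
          - (0 * ((ℓ : ℂ) / 2 - 0 + Complex.I * wst)
              - (B : ℂ) * (R : ℂ) ^ 2 / 2 * Complex.I * Complex.I) /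
              ((ℓ : ℂ) / 2 - 0 + Complex.I * wst) ^ 2) wst := by
      have hb : HasDerivAt (fun w : ℂ => (B : ℂ) * w + Complex.I * ((B : ℂ) * (ℓ : ℂ) / 2))
          (B : ℂ) wst := by
        simpa using ((hasDerivAt_id wst).const_mul (B : ℂ)).add_const
          (Complex.I * ((B : ℂ) * (ℓ : ℂ) / 2))
      exact (hb.sub ((hasDerivAt_const wst ((B:ℂ)*(R:ℂ)^2/2*Complex.I)).div hu1 hne1)).sub
        ((hasDerivAt_const wst ((B:ℂ)*(R:ℂ)^2/2*Complex.I)).div hu2 hne2)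
    rw [hg.deriv]
    have hIw' : ((ℓ : ℂ) / 2 + 0 + Complex.I * wst) = ((ℓ / 2 + a : ℝ) : ℂ) := by
      rw [hIw]; push_cast; ring
    have hIw'' : ((ℓ : ℂ) / 2 - 0 + Complex.I * wst) = ((ℓ / 2 + a : ℝ) : ℂ) := by
      rw [hIw]; push_cast; ring
    rw [hIw', hIw'', hsq]
    have hII : (B : ℂ) * (R : ℂ) ^ 2 / 2 * Complex.I * Complex.I
        = ((-(B * R ^ 2 / 2) : ℝ) : ℂ) := by
      rw [mul_assoc, Complex.I_mul_I]; push_cast; ring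
    rw [hII]
    have hreal : B - (0 * (ℓ / 2 + a) - (-(B * R ^ 2 / 2))) / (ℓ / 2 + a) ^ 2
        - (0 * (ℓ / 2 + a) - (-(B * R ^ 2 / 2))) / (ℓ / 2 + a) ^ 2
        = B / (2 * R ^ 2) * (2 * a) * (ℓ - 2 * a) := by
      have hR2 : R ^ 2 = (ℓ / 2 + a) * (ℓ / 2 - a) := by nlinarith
      have hqpos : (0:ℝ) < ℓ / 2 - a := by nlinarith
      obtain ⟨p, q, hpd, hqd⟩ : ∃ p q : ℝ, p = ℓ / 2 + a ∧ q = ℓ / 2 - a := ⟨_, _, rfl, rfl⟩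
      have hp0 : p ≠ 0 := by rw [hpd]; exact hre0.ne'
      have hq0 : q ≠ 0 := by rw [hqd]; exact hqpos.ne'
      have hR2' : R ^ 2 = p * q := by rw [hpd, hqd]; exact hR2
      have hsum : ℓ = p + q := by rw [hpd, hqd]; ring
      have haq : a = (p - q) / 2 := by rw [hpd, hqd]; ring
      rw [← hpd, hR2', hsum, haq]
      field_simp
      ring
    exact_mod_cast congrArg (fun x : ℝ => (x : ℂ)) hreal
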